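/- (Lemma: bound on the average momentum ū) Under the lower-bound, mixing, smoothness, and bounded-variance assumptions, for every round r ≥ 0 the Momentum Tracking iterates satisfy E‖ū^{(r+1)}‖² ≤ (2L²/(1−β)) ∑_{k=0}^r β^{r−k} Ξ^{(k)} + (2/(1−β)) ∑_{k=0}^{r} β^{r−k} E‖∇f(x̄^{(k)})‖² + 2σ²/(N(1−β)²). -/

import Mathlib

open MeasureTheory
open scoped BigOperators

noncomputable section

/-- Problem data and standing assumptions (lower bound, mixing, smoothness) for
decentralized optimization over `N` nodes in `ℝ^d`. -/
structure MTProblem (N d : ℕ) (Ω : Type) [mΩ : MeasurableSpace Ω] where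
  /-- Probability measure driving the stochastic gradients. -/
  μ : Measure Ω
  prob : IsProbabilityMeasure μ
  fstar : ℝ
  L : ℝ
  σ : ℝ
  p : ℝ
  β : ℝ
  /-- Local objectives `f_i`. -/
  f : Fin N → EuclideanSpace ℝ (Fin d) → ℝ
  /-- Local gradients `∇f_i`. -/
  g : Fin N → EuclideanSpace ℝ (Fin d) → EuclideanSpace ℝ (Fin d)
  /-- Mixing matrix. -/
  W : Fin N → Fin N → ℝ
  /-- Common initial parameter. -/
  x0 : EuclideanSpace ℝ (Fin d)
  hN : 0 < N
  hβ0 : 0 ≤ β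
  hβ1 : β < 1
  hL : 0 < L
  hp0 : 0 < p
  hp1 : p ≤ 1
  hgrad : ∀ i v, HasGradientAt (f i) (g i v) v
  /-- Lower bound: `f⋆ ≤ f(x)` for all `x`. -/
  hlb : ∀ v, fstar ≤ (N : ℝ)⁻¹ * ∑ i, f i v
  /-- `L`-smoothness of each `f_i`. -/
  hsmooth : ∀ i v w, ‖g i v - g i w‖ ≤ L * ‖v - w‖
  hWsymm : ∀ i j, W i j = W j i
  hWrow : ∀ i, ∑ j, W i j = 1
  hWcol : ∀ j, ∑ i, W i j = 1
  /-- Spectral gap: `‖XW − X̄‖_F² ≤ (1−p)‖X − X̄‖_F²`. -/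
  hmix : ∀ X : Fin N → EuclideanSpace ℝ (Fin d),
    ∑ j, ‖(∑ i, W i j • X i) - (N : ℝ)⁻¹ • ∑ i, X i‖ ^ 2
      ≤ (1 - p) * ∑ j, ‖X j - (N : ℝ)⁻¹ • ∑ i, X i‖ ^ 2

namespace MTProblem

variable {N d : ℕ} {Ω : Type} [mΩ : MeasurableSpace Ω]

/-- Global objective `f = (1/N) ∑_i f_i`. -/
def F (P : MTProblem N d Ω) (v : EuclideanSpace ℝ (Fin d)) : ℝ :=
  (N : ℝ)⁻¹ * ∑ i, P.f i v

/-- Gradient of the global objective, `∇f = (1/N) ∑_i ∇f_i`. -/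
def gradF (P : MTProblem N d Ω) (v : EuclideanSpace ℝ (Fin d)) : EuclideanSpace ℝ (Fin d) :=
  (N : ℝ)⁻¹ • ∑ i, P.g i v

end MTProblem

/-- A run of the Momentum Tracking algorithm: trajectories `x, u, c`, realized
stochastic gradients `G r i = ∇F_i(x_i^{(r)}; ξ_i^{(r)})`, together with the update
rules, the standard initialization, and the stochastic-gradient assumptions
(unbiasedness, bounded variance, independence across nodes and rounds in the form
of orthogonality of the noises). -/
structure MTRun {N d : ℕ} {Ω : Type} [mΩ : MeasurableSpace Ω] (P : MTProblem N d Ω) where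
  /-- Step size. -/
  η : ℝ
  hη : 0 < η
  x : ℕ → Fin N → Ω → EuclideanSpace ℝ (Fin d)
  u : ℕ → Fin N → Ω → EuclideanSpace ℝ (Fin d)
  c : ℕ → Fin N → Ω → EuclideanSpace ℝ (Fin d)
  G : ℕ → Fin N → Ω → EuclideanSpace ℝ (Fin d)
  /-- Filtration of the information available at each round. -/
  ℱ : MeasureTheory.Filtration ℕ mΩ
  hx0 : ∀ i, x 0 i = fun _ => P.x0
  hu0 : ∀ i ω, u 0 i ω = (1 - P.β)⁻¹ • (G 0 i ω - (N : ℝ)⁻¹ • ∑ j, G 0 j ω)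
  hc0 : ∀ i, c 0 i = u 0 i
  hu : ∀ r i ω, u (r + 1) i ω = P.β • u r i ω + G r i ω
  hx : ∀ r i ω, x (r + 1) i ω
      = (∑ j, P.W i j • x r j ω) - η • (u (r + 1) i ω - c r i ω)
  hc : ∀ r i ω, c (r + 1) i ω
      = (∑ j, P.W i j • (c r j ω - u (r + 1) j ω)) + u (r + 1) i ω
  hmeas : ∀ r i, MemLp (G r i) 2 P.μ
  hadapted_x : ∀ r i, StronglyMeasurable[ℱ r] (x r i)
  hadapted_G : ∀ r i, StronglyMeasurable[ℱ (r + 1)] (G r i)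
  /-- Unbiasedness: `E[∇F_i(x_i^{(r)};ξ) | ℱ_r] = ∇f_i(x_i^{(r)})`. -/
  hunbiased : ∀ r i,
    MeasureTheory.condExp (ℱ r) P.μ (G r i) =ᵐ[P.μ] fun ω => P.g i (x r i ω)
  /-- Bounded variance. -/
  hvar : ∀ r i, ∫ ω, ‖G r i ω - P.g i (x r i ω)‖ ^ 2 ∂P.μ ≤ P.σ ^ 2
  /-- Independence across nodes and rounds (orthogonality of the noises). -/
  horth : ∀ r s : ℕ, ∀ i j : Fin N, (r, i) ≠ (s, j) →
    ∫ ω, (inner ℝ (G r i ω - P.g i (x r i ω)) (G s j ω - P.g j (x s j ω)) : ℝ) ∂P.μ = 0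

namespace MTRun

variable {N d : ℕ} {Ω : Type} [mΩ : MeasurableSpace Ω] {P : MTProblem N d Ω}

/-- Node-average of the parameters, `x̄^{(r)}`. -/
def xbar (S : MTRun P) (r : ℕ) (ω : Ω) : EuclideanSpace ℝ (Fin d) :=
  (N : ℝ)⁻¹ • ∑ i, S.x r i ω

/-- Node-average of the momenta, `ū^{(r)}`. -/
def ubar (S : MTRun P) (r : ℕ) (ω : Ω) : EuclideanSpace ℝ (Fin d) :=
  (N : ℝ)⁻¹ • ∑ i, S.u r i ω

/-- Node-average of the correction variables, `c̄^{(r)}`. -/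
def cbar (S : MTRun P) (r : ℕ) (ω : Ω) : EuclideanSpace ℝ (Fin d) :=
  (N : ℝ)⁻¹ • ∑ i, S.c r i ω

/-- Auxiliary average `z̄^{(r)}`. -/
def zbar (S : MTRun P) : ℕ → Ω → EuclideanSpace ℝ (Fin d)
  | 0 => S.xbar 0
  | r + 1 => fun ω =>
      (1 - P.β)⁻¹ • S.xbar (r + 1) ω - (P.β * (1 - P.β)⁻¹) • S.xbar r ω

/-- Auxiliary sequence `d_i^{(r)}`. -/
def dseq (S : MTRun P) : ℕ → Fin N → Ω → EuclideanSpace ℝ (Fin d)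
  | 0 => fun i ω => (1 - P.β)⁻¹ • (P.g i (S.xbar 0 ω) - P.gradF (S.xbar 0 ω))
  | r + 1 => fun i ω => P.β • dseq S r i ω + P.g i (S.xbar r ω)

/-- Auxiliary sequence `e_i^{(r)}`. -/
def eseq (S : MTRun P) : ℕ → Fin N → Ω → EuclideanSpace ℝ (Fin d)
  | 0 => fun _ _ => 0
  | r + 1 => fun i ω => P.β • eseq S r i ω + P.gradF (S.xbar r ω)

/-- Node-average `d̄^{(r)}`. -/
def dbar (S : MTRun P) (r : ℕ) (ω : Ω) : EuclideanSpace ℝ (Fin d) :=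
  (N : ℝ)⁻¹ • ∑ i, S.dseq r i ω

/-- Node-average `ē^{(r)}`. -/
def ebar (S : MTRun P) (r : ℕ) (ω : Ω) : EuclideanSpace ℝ (Fin d) :=
  (N : ℝ)⁻¹ • ∑ i, S.eseq r i ω

/-- Consensus distance `Ξ^{(r)} = (1/N) E‖X^{(r)} − X̄^{(r)}‖_F²`. -/
def Xi (S : MTRun P) (r : ℕ) : ℝ :=
  (N : ℝ)⁻¹ * ∫ ω, (∑ i, ‖S.x r i ω - S.xbar r ω‖ ^ 2) ∂P.μ

/-- Tracking error `ℰ^{(r)} = (1/N) E‖D^{(r+1)} − C^{(r)} − E^{(r+1)}‖_F²`. -/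
def EE (S : MTRun P) (r : ℕ) : ℝ :=
  (N : ℝ)⁻¹ *
    ∫ ω, (∑ i, ‖S.dseq (r + 1) i ω - S.c r i ω - S.eseq (r + 1) i ω‖ ^ 2) ∂P.μ

/-- Momentum drift `𝒟^{(r)} = (1/N) E‖D^{(r+1)} − D^{(r)} − E^{(r+1)} + E^{(r)}‖_F²`. -/
def DD (S : MTRun P) (r : ℕ) : ℝ :=
  (N : ℝ)⁻¹ *
    ∫ ω, (∑ i,
      ‖S.dseq (r + 1) i ω - S.dseq r i ω - S.eseq (r + 1) i ω + S.eseq r i ω‖ ^ 2) ∂P.μ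

end MTRun

/-! ### Auxiliary material for the proof of `ubar_bound` -/

section AuxGeneral

open MeasureTheory

/-- Conditional expectation commutes with continuous linear maps. -/
theorem aux_condExp_clm {α F G : Type*} {m m0 : MeasurableSpace α} {μ : Measure α}
    [NormedAddCommGroup F] [NormedSpace ℝ F] [CompleteSpace F]
    [NormedAddCommGroup G] [NormedSpace ℝ G] [CompleteSpace G]
    (hm : m ≤ m0) [SigmaFinite (μ.trim hm)] (T : F →L[ℝ] G) {f : α → F}
    (hf : Integrable f μ) :
    (fun ω => T ((μ[f|m]) ω)) =ᵐ[μ] μ[fun ω => T (f ω)|m] := by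
  refine ae_eq_condExp_of_forall_setIntegral_eq hm (T.integrable_comp hf)
    (fun s _ _ => (T.integrable_comp integrable_condExp).integrableOn)
    (fun s hs hμs => ?_)
    ((T.continuous.comp_stronglyMeasurable stronglyMeasurable_condExp).aestronglyMeasurable)
  rw [T.integral_comp_comm integrable_condExp.integrableOn,
      setIntegral_condExp hm hf hs, ← T.integral_comp_comm hf.integrableOn]

/-- The inner product of two `L²` functions is integrable. -/
theorem aux_integrable_inner {α : Type*} {m0 : MeasurableSpace α} {μ : Measure α}
    {E : Type*} [NormedAddCommGroup E] [InnerProductSpace ℝ E]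
    {f g : α → E} (hf : MemLp f 2 μ) (hg : MemLp g 2 μ) :
    Integrable (fun ω => (inner ℝ (f ω) (g ω) : ℝ)) μ := by
  have h := L2.integrable_inner (𝕜 := ℝ) (hf.toLp f) (hg.toLp g)
  refine h.congr ?_
  filter_upwards [hf.coeFn_toLp, hg.coeFn_toLp] with ω h1 h2
  rw [h1, h2]

/-- Product of two real `L²` functions is integrable. -/
theorem aux_integrable_mul {α : Type*} {m0 : MeasurableSpace α} {μ : Measure α}
    {f g : α → ℝ} (hf : MemLp f 2 μ) (hg : MemLp g 2 μ) :
    Integrable (fun ω => f ω * g ω) μ := by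
  simpa [RCLike.inner_apply, conj_trivial] using aux_integrable_inner hg hf

theorem aux_sq_split {E : Type*} [NormedAddCommGroup E] (a b : E) :
    ‖a‖ ^ 2 ≤ 2 * ‖a - b‖ ^ 2 + 2 * ‖b‖ ^ 2 := by
  have h : ‖a‖ ≤ ‖a - b‖ + ‖b‖ := by
    simpa using norm_add_le (a - b) b
  have h2 := mul_self_le_mul_self (norm_nonneg a) h
  nlinarith [h2, sq_nonneg (‖a - b‖ - ‖b‖)]

end AuxGeneral

namespace MTRun

open MeasureTheory Finset

variable {N d : ℕ} {Ω : Type} [mΩ : MeasurableSpace Ω] {P : MTProblem N d Ω}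

/-- The stochastic gradient noise. -/
def nse (S : MTRun P) (r : ℕ) (i : Fin N) (ω : Ω) : EuclideanSpace ℝ (Fin d) :=
  S.G r i ω - P.g i (S.x r i ω)

/-- Node-average of the true local gradients at the current iterates. -/
def gb (S : MTRun P) (r : ℕ) (ω : Ω) : EuclideanSpace ℝ (Fin d) :=
  (N : ℝ)⁻¹ • ∑ i, P.g i (S.x r i ω)

theorem g_lip (P : MTProblem N d Ω) (i : Fin N) : LipschitzWith P.L.toNNReal (P.g i) := by
  refine LipschitzWith.of_dist_le_mul fun v w => ?_
  simpa [dist_eq_norm, Real.coe_toNNReal _ P.hL.le] using P.hsmooth i v w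

theorem g_cont (P : MTProblem N d Ω) (i : Fin N) : Continuous (P.g i) :=
  (g_lip P i).continuous

variable (S : MTRun P)

theorem memLp_g_comp {P : MTProblem N d Ω} {h : Ω → EuclideanSpace ℝ (Fin d)} (hh : MemLp h 2 P.μ) (i : Fin N) :
    MemLp (fun ω => P.g i (h ω)) 2 P.μ := by
  haveI := P.prob
  have hb : ∀ v : EuclideanSpace ℝ (Fin d), ‖P.g i v‖ ≤ ‖P.g i 0‖ + P.L * ‖v‖ := by
    intro v
    have := P.hsmooth i v 0
    have hv : P.g i 0 + (P.g i v - P.g i 0) = P.g i v := by abel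
    calc ‖P.g i v‖ = ‖P.g i 0 + (P.g i v - P.g i 0)‖ := by rw [hv]
      _ ≤ ‖P.g i 0‖ + ‖P.g i v - P.g i 0‖ := norm_add_le _ _
      _ ≤ ‖P.g i 0‖ + P.L * ‖v‖ := by
          have := P.hsmooth i v 0
          simp only [sub_zero] at this
          linarith
  have hdom : MemLp (fun ω => ‖P.g i 0‖ + P.L * ‖h ω‖) 2 P.μ :=
    (memLp_const ‖P.g i 0‖).add ((hh.norm).const_mul P.L)
  refine hdom.of_le
    ((g_cont P i).comp_aestronglyMeasurable hh.aestronglyMeasurable) ?_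
  refine Filter.Eventually.of_forall fun ω => ?_
  have h1 : (0:ℝ) ≤ ‖P.g i 0‖ + P.L * ‖h ω‖ :=
    add_nonneg (norm_nonneg _) (mul_nonneg P.hL.le (norm_nonneg _))
  calc ‖P.g i (h ω)‖ ≤ ‖P.g i 0‖ + P.L * ‖h ω‖ := hb _
    _ ≤ ‖(‖P.g i 0‖ + P.L * ‖h ω‖)‖ := le_abs_self _

theorem mem_xuc : ∀ r : ℕ,
    (∀ i, MemLp (S.x r i) 2 P.μ) ∧ (∀ i, MemLp (S.u r i) 2 P.μ) ∧
      (∀ i, MemLp (S.c r i) 2 P.μ) := by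
  haveI := P.prob
  intro r
  induction r with
  | zero =>
    have hu0 : ∀ i, MemLp (S.u 0 i) 2 P.μ := by
      intro i
      have : S.u 0 i = fun ω => (1 - P.β)⁻¹ • (S.G 0 i ω - (N : ℝ)⁻¹ • ∑ j, S.G 0 j ω) :=
        funext fun ω => S.hu0 i ω
      rw [this]
      exact (((S.hmeas 0 i).sub
        ((memLp_finset_sum univ fun j _ => S.hmeas 0 j).const_smul (N : ℝ)⁻¹)).const_smul (1 - P.β)⁻¹)
    refine ⟨fun i => ?_, hu0, fun i => ?_⟩
    · rw [S.hx0 i]; exact memLp_const _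
    · rw [S.hc0 i]; exact hu0 i
  | succ r ih =>
    obtain ⟨ihx, ihu, ihc⟩ := ih
    have hu1 : ∀ i, MemLp (S.u (r + 1) i) 2 P.μ := by
      intro i
      have : S.u (r + 1) i = fun ω => P.β • S.u r i ω + S.G r i ω :=
        funext fun ω => S.hu r i ω
      rw [this]
      exact ((ihu i).const_smul P.β).add (S.hmeas r i)
    refine ⟨fun i => ?_, hu1, fun i => ?_⟩
    · have : S.x (r + 1) i
          = fun ω => (∑ j, P.W i j • S.x r j ω) - S.η • (S.u (r + 1) i ω - S.c r i ω) :=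
        funext fun ω => S.hx r i ω
      rw [this]
      exact (memLp_finset_sum univ fun j _ => (ihx j).const_smul (P.W i j)).sub
        (((hu1 i).sub (ihc i)).const_smul S.η)
    · have : S.c (r + 1) i
          = fun ω => (∑ j, P.W i j • (S.c r j ω - S.u (r + 1) j ω)) + S.u (r + 1) i ω :=
        funext fun ω => S.hc r i ω
      rw [this]
      exact (memLp_finset_sum univ fun j _ => ((ihc j).sub (hu1 j)).const_smul (P.W i j)).add (hu1 i)

theorem mem_x (r : ℕ) (i : Fin N) : MemLp (S.x r i) 2 P.μ := (S.mem_xuc r).1 i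

theorem mem_ubar (r : ℕ) : MemLp (S.ubar r) 2 P.μ := by
  have : S.ubar r = fun ω => (N : ℝ)⁻¹ • ∑ i, S.u r i ω := rfl
  rw [this]
  exact (memLp_finset_sum univ fun i _ => (S.mem_xuc r).2.1 i).const_smul (N : ℝ)⁻¹

theorem mem_xbar (r : ℕ) : MemLp (S.xbar r) 2 P.μ := by
  have : S.xbar r = fun ω => (N : ℝ)⁻¹ • ∑ i, S.x r i ω := rfl
  rw [this]
  exact (memLp_finset_sum univ fun i _ => S.mem_x r i).const_smul (N : ℝ)⁻¹

theorem mem_gb (r : ℕ) : MemLp (S.gb r) 2 P.μ := by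
  have : S.gb r = fun ω => (N : ℝ)⁻¹ • ∑ i, P.g i (S.x r i ω) := rfl
  rw [this]
  exact (memLp_finset_sum univ fun i _ => memLp_g_comp (S.mem_x r i) i).const_smul (N : ℝ)⁻¹

theorem mem_nse (r : ℕ) (i : Fin N) : MemLp (S.nse r i) 2 P.μ :=
  (S.hmeas r i).sub (memLp_g_comp (S.mem_x r i) i)

theorem ubar_zero : S.ubar 0 = fun _ => 0 := by
  funext ω
  have hN : (N : ℝ) ≠ 0 := Nat.cast_ne_zero.2 P.hN.ne'
  have : ∑ i, S.u 0 i ω = 0 := by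
    have h1 : ∀ i : Fin N, S.u 0 i ω
        = (1 - P.β)⁻¹ • (S.G 0 i ω - (N : ℝ)⁻¹ • ∑ j, S.G 0 j ω) := fun i => S.hu0 i ω
    simp only [h1, ← smul_sum, sum_sub_distrib, sum_const, card_univ, Fintype.card_fin]
    rw [← Nat.cast_smul_eq_nsmul ℝ, smul_smul, inv_mul_cancel₀ hN, one_smul, sub_self,
      smul_zero]
  simp [MTRun.ubar, this]

theorem ubar_succ (r : ℕ) :
    S.ubar (r + 1) = fun ω => (P.β • S.ubar r ω + S.gb r ω) + (N : ℝ)⁻¹ • ∑ i, S.nse r i ω := by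
  funext ω
  have h1 : ∑ i, S.u (r + 1) i ω = P.β • ∑ i, S.u r i ω + ∑ i, S.G r i ω := by
    simp [S.hu r, sum_add_distrib, smul_sum]
  have h2 : ∑ i, S.G r i ω = ∑ i, P.g i (S.x r i ω) + ∑ i, S.nse r i ω := by
    simp [MTRun.nse, sum_add_distrib, sum_sub_distrib]
  simp only [MTRun.ubar, MTRun.gb, h1, h2, smul_add, smul_comm (N:ℝ)⁻¹ P.β]
  abel

theorem ubar_succ' (r : ℕ) :
    S.ubar (r + 1) = fun ω => P.β • S.ubar r ω + (N : ℝ)⁻¹ • ∑ i, S.G r i ω := by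
  funext ω
  have h1 : ∑ i, S.u (r + 1) i ω = P.β • ∑ i, S.u r i ω + ∑ i, S.G r i ω := by
    simp [S.hu r, sum_add_distrib, smul_sum]
  simp only [MTRun.ubar, h1, smul_add, smul_comm (N:ℝ)⁻¹ P.β]

theorem sm_ubar (r : ℕ) : StronglyMeasurable[S.ℱ r] (S.ubar r) := by
  induction r with
  | zero => rw [S.ubar_zero]; exact stronglyMeasurable_const
  | succ r ih =>
    rw [S.ubar_succ']
    exact ((ih.mono (S.ℱ.mono r.le_succ)).const_smul P.β).add
      ((Finset.stronglyMeasurable_fun_sum univ fun i _ => S.hadapted_G r i).const_smul (N : ℝ)⁻¹)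

theorem sm_gb (r : ℕ) : StronglyMeasurable[S.ℱ r] (S.gb r) := by
  have : S.gb r = fun ω => (N : ℝ)⁻¹ • ∑ i, P.g i (S.x r i ω) := rfl
  rw [this]
  exact (Finset.stronglyMeasurable_fun_sum univ fun i _ =>
    (g_cont P i).comp_stronglyMeasurable (S.hadapted_x r i)).const_smul (N : ℝ)⁻¹

end MTRun

namespace MTRun

open MeasureTheory Finset

variable {N d : ℕ} {Ω : Type} [mΩ : MeasurableSpace Ω] {P : MTProblem N d Ω} (S : MTRun P)

theorem condExp_nse (r : ℕ) (i : Fin N) :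
    P.μ[S.nse r i|S.ℱ r] =ᵐ[P.μ] 0 := by
  haveI := P.prob
  have hm : S.ℱ r ≤ mΩ := S.ℱ.le r
  have hgx : MemLp (fun ω => P.g i (S.x r i ω)) 2 P.μ := memLp_g_comp (S.mem_x r i) i
  have hGint : Integrable (S.G r i) P.μ := (S.hmeas r i).integrable one_le_two
  have hgxint : Integrable (fun ω => P.g i (S.x r i ω)) P.μ := hgx.integrable one_le_two
  have hsub : P.μ[S.nse r i|S.ℱ r]
      =ᵐ[P.μ] P.μ[S.G r i|S.ℱ r] - P.μ[fun ω => P.g i (S.x r i ω)|S.ℱ r] :=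
    condExp_sub hGint hgxint _
  have hgxm : StronglyMeasurable[S.ℱ r] (fun ω => P.g i (S.x r i ω)) :=
    (g_cont P i).comp_stronglyMeasurable (S.hadapted_x r i)
  have heq : P.μ[fun ω => P.g i (S.x r i ω)|S.ℱ r] = fun ω => P.g i (S.x r i ω) :=
    condExp_of_stronglyMeasurable hm hgxm hgxint
  filter_upwards [hsub, S.hunbiased r i] with ω h1 h2
  have : (P.μ[S.nse r i|S.ℱ r]) ω
      = (P.μ[S.G r i|S.ℱ r]) ω - (P.μ[fun ω => P.g i (S.x r i ω)|S.ℱ r]) ω := h1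
  rw [this, heq, h2]
  simp

theorem integral_inner_nse (r : ℕ) (i : Fin N) {h : Ω → EuclideanSpace ℝ (Fin d)}
    (hsm : StronglyMeasurable[S.ℱ r] h) (hh : MemLp h 2 P.μ) :
    ∫ ω, (inner ℝ (h ω) (S.nse r i ω) : ℝ) ∂P.μ = 0 := by
  haveI := P.prob
  have hm : S.ℱ r ≤ mΩ := S.ℱ.le r
  have hξ2 : MemLp (S.nse r i) 2 P.μ := S.mem_nse r i
  have hcond := S.condExp_nse r i
  -- coordinatewise
  have hinner : ∀ ω, (inner ℝ (h ω) (S.nse r i ω) : ℝ) = ∑ j, h ω j * S.nse r i ω j := by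
    intro ω
    simp [PiLp.inner_apply, RCLike.inner_apply, conj_trivial, mul_comm]
  rw [integral_congr_ae (Filter.Eventually.of_forall hinner)]
  have hj2 : ∀ j : Fin d, MemLp (fun ω => h ω j) 2 P.μ := by
    intro j
    have := (EuclideanSpace.proj (𝕜 := ℝ) j).comp_memLp' hh
    exact this
  have hξj2 : ∀ j : Fin d, MemLp (fun ω => S.nse r i ω j) 2 P.μ := by
    intro j
    have := (EuclideanSpace.proj (𝕜 := ℝ) j).comp_memLp' hξ2
    exact this
  rw [integral_finset_sum univ fun j _ => aux_integrable_mul (hj2 j) (hξj2 j)]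
  refine Finset.sum_eq_zero fun j _ => ?_
  -- coordinate conditional expectation is zero
  have hcj : P.μ[fun ω => S.nse r i ω j|S.ℱ r] =ᵐ[P.μ] 0 := by
    have h1 := aux_condExp_clm hm (EuclideanSpace.proj (𝕜 := ℝ) j)
      (hξ2.integrable one_le_two)
    refine (h1.symm.trans ?_)
    filter_upwards [hcond] with ω hω
    simp [hω]
  have hsmj : StronglyMeasurable[S.ℱ r] (fun ω => h ω j) :=
    (EuclideanSpace.proj (𝕜 := ℝ) j).continuous.comp_stronglyMeasurable hsm
  have hmulint : Integrable ((fun ω => h ω j) * fun ω => S.nse r i ω j) P.μ :=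
    aux_integrable_mul (hj2 j) (hξj2 j)
  have hpull := condExp_mul_of_stronglyMeasurable_left hsmj hmulint ((hξj2 j).integrable one_le_two)
  calc ∫ ω, h ω j * S.nse r i ω j ∂P.μ
      = ∫ ω, (P.μ[(fun ω => h ω j) * fun ω => S.nse r i ω j|S.ℱ r]) ω ∂P.μ :=
        (integral_condExp hm).symm
    _ = ∫ ω, h ω j * (P.μ[fun ω => S.nse r i ω j|S.ℱ r]) ω ∂P.μ := by
        refine integral_congr_ae ?_
        filter_upwards [hpull] with ω hω
        exact hω
    _ = ∫ ω, (0:ℝ) ∂P.μ := by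
        refine integral_congr_ae ?_
        filter_upwards [hcj] with ω hω
        rw [hω]; simp
    _ = 0 := integral_zero _ _

end MTRun

namespace MTRun

open MeasureTheory Finset

variable {N d : ℕ} {Ω : Type} [mΩ : MeasurableSpace Ω] {P : MTProblem N d Ω} (S : MTRun P)

theorem aux_momentum_sq (a b : EuclideanSpace ℝ (Fin d)) :
    ‖P.β • a + b‖ ^ 2 ≤ P.β * ‖a‖ ^ 2 + (1 - P.β)⁻¹ * ‖b‖ ^ 2 := by
  have h1β : (0:ℝ) < 1 - P.β := by linarith [P.hβ1]
  set A := ‖a‖ with hA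
  set B := ‖b‖ with hB
  have h1 : ‖P.β • a + b‖ ≤ P.β * A + B := by
    refine (norm_add_le _ _).trans ?_
    rw [norm_smul]
    simp [abs_of_nonneg P.hβ0, hA, hB]
  have h2 : ‖P.β • a + b‖ ^ 2 ≤ (P.β * A + B) ^ 2 := by
    have hnn : (0:ℝ) ≤ P.β * A + B :=
      add_nonneg (mul_nonneg P.hβ0 (norm_nonneg a)) (norm_nonneg b)
    nlinarith [norm_nonneg (P.β • a + b), h1]
  refine h2.trans ?_
  have hid : P.β * A ^ 2 + (1 - P.β)⁻¹ * B ^ 2 - (P.β * A + B) ^ 2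
      = (P.β * ((1 - P.β) * A - B) ^ 2) * (1 - P.β)⁻¹ := by
    field_simp
    ring
  have hnn : (0:ℝ) ≤ (P.β * ((1 - P.β) * A - B) ^ 2) * (1 - P.β)⁻¹ :=
    mul_nonneg (mul_nonneg P.hβ0 (sq_nonneg _)) (inv_nonneg.2 h1β.le)
  linarith [hid ▸ hnn]

theorem nse_sq_integral (r : ℕ) :
    ∫ ω, ‖(N : ℝ)⁻¹ • ∑ i, S.nse r i ω‖ ^ 2 ∂P.μ ≤ P.σ ^ 2 / N := by
  haveI := P.prob
  have hNpos : (0:ℝ) < N := Nat.cast_pos.2 P.hN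
  have hptw : ∀ ω, ‖(N : ℝ)⁻¹ • ∑ i, S.nse r i ω‖ ^ 2
      = (N:ℝ)⁻¹ * ((N:ℝ)⁻¹ * ∑ i, ∑ j, (inner ℝ (S.nse r i ω) (S.nse r j ω) : ℝ)) := by
    intro ω
    rw [← real_inner_self_eq_norm_sq, real_inner_smul_left, real_inner_smul_right,
      sum_inner]
    congr 2
    refine Finset.sum_congr rfl fun i _ => ?_
    rw [inner_sum]
  rw [integral_congr_ae (Filter.Eventually.of_forall hptw)]
  have hint : ∀ i j : Fin N, Integrable (fun ω => (inner ℝ (S.nse r i ω) (S.nse r j ω) : ℝ)) P.μ :=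
    fun i j => aux_integrable_inner (S.mem_nse r i) (S.mem_nse r j)
  rw [MeasureTheory.integral_const_mul, MeasureTheory.integral_const_mul,
    integral_finset_sum univ (fun i _ => integrable_finset_sum univ fun j _ => hint i j)]
  have hsum : ∀ i : Fin N,
      ∫ ω, (∑ j, (inner ℝ (S.nse r i ω) (S.nse r j ω) : ℝ)) ∂P.μ ≤ P.σ ^ 2 := by
    intro i
    rw [integral_finset_sum univ fun j _ => hint i j]
    have hdiag : ∫ ω, (inner ℝ (S.nse r i ω) (S.nse r i ω) : ℝ) ∂P.μ ≤ P.σ ^ 2 := by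
      refine le_trans (le_of_eq (integral_congr_ae (Filter.Eventually.of_forall fun ω => ?_)))
        (S.hvar r i)
      exact real_inner_self_eq_norm_sq _
    have hsingle : (∑ j, ∫ ω, (inner ℝ (S.nse r i ω) (S.nse r j ω) : ℝ) ∂P.μ)
        = ∫ ω, (inner ℝ (S.nse r i ω) (S.nse r i ω) : ℝ) ∂P.μ := by
      refine Finset.sum_eq_single i (fun j _ hji => ?_) (fun hni => absurd (mem_univ i) hni)
      have hne : (r, i) ≠ (r, j) := by
        simp only [ne_eq, Prod.mk.injEq, not_and]
        exact fun _ h => hji h.symm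
      exact S.horth r r i j hne
    rw [hsingle]
    exact hdiag
  calc (N:ℝ)⁻¹ * ((N:ℝ)⁻¹ * ∑ i, ∫ ω, (∑ j, (inner ℝ (S.nse r i ω) (S.nse r j ω) : ℝ)) ∂P.μ)
      ≤ (N:ℝ)⁻¹ * ((N:ℝ)⁻¹ * ∑ _i : Fin N, P.σ ^ 2) := by
        refine mul_le_mul_of_nonneg_left (mul_le_mul_of_nonneg_left ?_ (by positivity))
          (by positivity)
        exact Finset.sum_le_sum fun i _ => hsum i
    _ = P.σ ^ 2 / N := by
        simp only [sum_const, card_univ, Fintype.card_fin, nsmul_eq_mul]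
        field_simp

theorem step_ineq (r : ℕ) :
    ∫ ω, ‖S.ubar (r + 1) ω‖ ^ 2 ∂P.μ ≤
      P.β * ∫ ω, ‖S.ubar r ω‖ ^ 2 ∂P.μ
        + (1 - P.β)⁻¹ * ∫ ω, ‖S.gb r ω‖ ^ 2 ∂P.μ + P.σ ^ 2 / N := by
  haveI := P.prob
  set w : Ω → EuclideanSpace ℝ (Fin d) := fun ω => P.β • S.ubar r ω + S.gb r ω with hw
  set z : Ω → EuclideanSpace ℝ (Fin d) := fun ω => (N : ℝ)⁻¹ • ∑ i, S.nse r i ω with hz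
  have hw2 : MemLp w 2 P.μ := ((S.mem_ubar r).const_smul P.β).add (S.mem_gb r)
  have hz2 : MemLp z 2 P.μ :=
    (memLp_finset_sum univ fun i _ => S.mem_nse r i).const_smul (N : ℝ)⁻¹
  have hwsm : StronglyMeasurable[S.ℱ r] w :=
    ((S.sm_ubar r).const_smul P.β).add (S.sm_gb r)
  have hdecomp : S.ubar (r + 1) = fun ω => w ω + z ω := S.ubar_succ r
  -- integrability of the three pieces
  have hwsq : Integrable (fun ω => ‖w ω‖ ^ 2) P.μ :=
    (memLp_two_iff_integrable_sq_norm hw2.aestronglyMeasurable).1 hw2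
  have hzsq : Integrable (fun ω => ‖z ω‖ ^ 2) P.μ :=
    (memLp_two_iff_integrable_sq_norm hz2.aestronglyMeasurable).1 hz2
  have hwz : Integrable (fun ω => (inner ℝ (w ω) (z ω) : ℝ)) P.μ :=
    aux_integrable_inner hw2 hz2
  have h2int : Integrable (fun ω => 2 * (inner ℝ (w ω) (z ω) : ℝ)) P.μ := hwz.const_mul 2
  have h1int : Integrable (fun ω => ‖w ω‖ ^ 2 + 2 * (inner ℝ (w ω) (z ω) : ℝ)) P.μ :=
    hwsq.add h2int
  have hexpand : ∫ ω, ‖S.ubar (r + 1) ω‖ ^ 2 ∂P.μ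
      = (∫ ω, ‖w ω‖ ^ 2 ∂P.μ) + (∫ ω, 2 * (inner ℝ (w ω) (z ω) : ℝ) ∂P.μ)
        + ∫ ω, ‖z ω‖ ^ 2 ∂P.μ := by
    simp only [hdecomp]
    calc ∫ ω, ‖w ω + z ω‖ ^ 2 ∂P.μ
        = ∫ ω, (‖w ω‖ ^ 2 + 2 * (inner ℝ (w ω) (z ω) : ℝ) + ‖z ω‖ ^ 2) ∂P.μ :=
          integral_congr_ae (Filter.Eventually.of_forall fun ω => norm_add_sq_real _ _)
      _ = (∫ ω, ‖w ω‖ ^ 2 ∂P.μ) + (∫ ω, 2 * (inner ℝ (w ω) (z ω) : ℝ) ∂P.μ)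
          + ∫ ω, ‖z ω‖ ^ 2 ∂P.μ := by
          rw [integral_add h1int hzsq, integral_add hwsq h2int]
  have hcross : ∫ ω, 2 * (inner ℝ (w ω) (z ω) : ℝ) ∂P.μ = 0 := by
    rw [MeasureTheory.integral_const_mul]
    have hptw : ∀ ω, (inner ℝ (w ω) (z ω) : ℝ)
        = (N:ℝ)⁻¹ * ∑ i, (inner ℝ (w ω) (S.nse r i ω) : ℝ) := by
      intro ω
      rw [hz]
      simp only
      rw [real_inner_smul_right, inner_sum]
    rw [integral_congr_ae (Filter.Eventually.of_forall hptw),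
      MeasureTheory.integral_const_mul,
      integral_finset_sum univ
        (fun i _ => aux_integrable_inner hw2 (S.mem_nse r i))]
    rw [Finset.sum_eq_zero fun i _ => S.integral_inner_nse r i hwsm hw2]
    simp
  have hwbound : ∫ ω, ‖w ω‖ ^ 2 ∂P.μ
      ≤ P.β * ∫ ω, ‖S.ubar r ω‖ ^ 2 ∂P.μ + (1 - P.β)⁻¹ * ∫ ω, ‖S.gb r ω‖ ^ 2 ∂P.μ := by
    have hub : Integrable (fun ω => ‖S.ubar r ω‖ ^ 2) P.μ :=
      (memLp_two_iff_integrable_sq_norm (S.mem_ubar r).aestronglyMeasurable).1 (S.mem_ubar r)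
    have hgbq : Integrable (fun ω => ‖S.gb r ω‖ ^ 2) P.μ :=
      (memLp_two_iff_integrable_sq_norm (S.mem_gb r).aestronglyMeasurable).1 (S.mem_gb r)
    have h3 : Integrable (fun ω => P.β * ‖S.ubar r ω‖ ^ 2) P.μ := hub.const_mul _
    have h4 : Integrable (fun ω => (1 - P.β)⁻¹ * ‖S.gb r ω‖ ^ 2) P.μ := hgbq.const_mul _
    calc ∫ ω, ‖w ω‖ ^ 2 ∂P.μ
        ≤ ∫ ω, (P.β * ‖S.ubar r ω‖ ^ 2 + (1 - P.β)⁻¹ * ‖S.gb r ω‖ ^ 2) ∂P.μ := by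
          refine integral_mono hwsq (h3.add h4) fun ω => ?_
          exact aux_momentum_sq (P := P) _ _
      _ = P.β * ∫ ω, ‖S.ubar r ω‖ ^ 2 ∂P.μ + (1 - P.β)⁻¹ * ∫ ω, ‖S.gb r ω‖ ^ 2 ∂P.μ := by
          rw [integral_add h3 h4, MeasureTheory.integral_const_mul,
            MeasureTheory.integral_const_mul]
  have hzb := S.nse_sq_integral r
  rw [hexpand, hcross]
  have : ∫ ω, ‖z ω‖ ^ 2 ∂P.μ ≤ P.σ ^ 2 / N := hzb
  linarith

end MTRun

namespace MTRun

open MeasureTheory Finset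

variable {N d : ℕ} {Ω : Type} [mΩ : MeasurableSpace Ω] {P : MTProblem N d Ω} (S : MTRun P)

theorem mem_gradF_comp (r : ℕ) :
    MemLp (fun ω => P.gradF (S.xbar r ω)) 2 P.μ := by
  have : (fun ω => P.gradF (S.xbar r ω))
      = fun ω => (N : ℝ)⁻¹ • ∑ i, P.g i (S.xbar r ω) := rfl
  rw [this]
  exact (memLp_finset_sum univ fun i _ => memLp_g_comp (S.mem_xbar r) i).const_smul (N : ℝ)⁻¹

theorem gb_ptw_bound (r : ℕ) (ω : Ω) :
    ‖S.gb r ω‖ ^ 2 ≤ 2 * P.L ^ 2 * ((N : ℝ)⁻¹ * ∑ i, ‖S.x r i ω - S.xbar r ω‖ ^ 2)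
      + 2 * ‖P.gradF (S.xbar r ω)‖ ^ 2 := by
  have hN : ((N : ℝ)) ≠ 0 := Nat.cast_ne_zero.2 P.hN.ne'
  have hNpos : (0:ℝ) < N := Nat.cast_pos.2 P.hN
  have hcons : ‖S.gb r ω - P.gradF (S.xbar r ω)‖ ^ 2
      ≤ P.L ^ 2 * ((N : ℝ)⁻¹ * ∑ i, ‖S.x r i ω - S.xbar r ω‖ ^ 2) := by
    have hrw : S.gb r ω - P.gradF (S.xbar r ω)
        = (N : ℝ)⁻¹ • ∑ i, (P.g i (S.x r i ω) - P.g i (S.xbar r ω)) := by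
      simp [MTRun.gb, MTProblem.gradF, Finset.sum_sub_distrib, smul_sub]
    rw [hrw, norm_smul, Real.norm_eq_abs, abs_of_nonneg (inv_nonneg.2 hNpos.le)]
    have h1 : ‖∑ i, (P.g i (S.x r i ω) - P.g i (S.xbar r ω))‖
        ≤ ∑ i, ‖P.g i (S.x r i ω) - P.g i (S.xbar r ω)‖ := norm_sum_le _ _
    have h2 : (∑ i, ‖P.g i (S.x r i ω) - P.g i (S.xbar r ω)‖) ^ 2
        ≤ (N : ℝ) * ∑ i, ‖P.g i (S.x r i ω) - P.g i (S.xbar r ω)‖ ^ 2 := by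
      simpa using
        sq_sum_le_card_mul_sum_sq (s := (univ : Finset (Fin N)))
          (f := fun i => ‖P.g i (S.x r i ω) - P.g i (S.xbar r ω)‖)
    have h3 : ∑ i, ‖P.g i (S.x r i ω) - P.g i (S.xbar r ω)‖ ^ 2
        ≤ P.L ^ 2 * ∑ i, ‖S.x r i ω - S.xbar r ω‖ ^ 2 := by
      rw [Finset.mul_sum]
      refine Finset.sum_le_sum fun i _ => ?_
      have h := P.hsmooth i (S.x r i ω) (S.xbar r ω)
      nlinarith [norm_nonneg (P.g i (S.x r i ω) - P.g i (S.xbar r ω)),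
        norm_nonneg (S.x r i ω - S.xbar r ω), P.hL.le,
        mul_nonneg P.hL.le (norm_nonneg (S.x r i ω - S.xbar r ω))]
    calc ((N : ℝ)⁻¹ * ‖∑ i, (P.g i (S.x r i ω) - P.g i (S.xbar r ω))‖) ^ 2
        = ((N : ℝ)⁻¹) ^ 2 * ‖∑ i, (P.g i (S.x r i ω) - P.g i (S.xbar r ω))‖ ^ 2 := by ring
      _ ≤ ((N : ℝ)⁻¹) ^ 2 * ((N : ℝ) * ∑ i, ‖P.g i (S.x r i ω) - P.g i (S.xbar r ω)‖ ^ 2) := by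
          refine mul_le_mul_of_nonneg_left ?_ (by positivity)
          refine le_trans ?_ h2
          exact pow_le_pow_left₀ (norm_nonneg _) h1 2
      _ ≤ ((N : ℝ)⁻¹) ^ 2 * ((N : ℝ) * (P.L ^ 2 * ∑ i, ‖S.x r i ω - S.xbar r ω‖ ^ 2)) := by
          refine mul_le_mul_of_nonneg_left (mul_le_mul_of_nonneg_left h3 hNpos.le)
            (by positivity)
      _ = P.L ^ 2 * ((N : ℝ)⁻¹ * ∑ i, ‖S.x r i ω - S.xbar r ω‖ ^ 2) := by
          field_simp
  have hsplit := aux_sq_split (S.gb r ω) (P.gradF (S.xbar r ω))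
  linarith

theorem gb_bound (r : ℕ) :
    ∫ ω, ‖S.gb r ω‖ ^ 2 ∂P.μ
      ≤ 2 * P.L ^ 2 * S.Xi r + 2 * ∫ ω, ‖P.gradF (S.xbar r ω)‖ ^ 2 ∂P.μ := by
  haveI := P.prob
  have hgbsq : Integrable (fun ω => ‖S.gb r ω‖ ^ 2) P.μ :=
    (memLp_two_iff_integrable_sq_norm (S.mem_gb r).aestronglyMeasurable).1 (S.mem_gb r)
  have hgfsq : Integrable (fun ω => ‖P.gradF (S.xbar r ω)‖ ^ 2) P.μ :=
    (memLp_two_iff_integrable_sq_norm (S.mem_gradF_comp r).aestronglyMeasurable).1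
      (S.mem_gradF_comp r)
  have hconsint : Integrable (fun ω => ∑ i, ‖S.x r i ω - S.xbar r ω‖ ^ 2) P.μ := by
    refine integrable_finset_sum univ fun i _ => ?_
    have hm : MemLp (fun ω => S.x r i ω - S.xbar r ω) 2 P.μ := (S.mem_x r i).sub (S.mem_xbar r)
    exact (memLp_two_iff_integrable_sq_norm hm.aestronglyMeasurable).1 hm
  have h3 : Integrable (fun ω => (2 * P.L ^ 2 * (N : ℝ)⁻¹) *
      ∑ i, ‖S.x r i ω - S.xbar r ω‖ ^ 2) P.μ := hconsint.const_mul _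
  have h4 : Integrable (fun ω => 2 * ‖P.gradF (S.xbar r ω)‖ ^ 2) P.μ := hgfsq.const_mul _
  calc ∫ ω, ‖S.gb r ω‖ ^ 2 ∂P.μ
      ≤ ∫ ω, ((2 * P.L ^ 2 * (N : ℝ)⁻¹) * (∑ i, ‖S.x r i ω - S.xbar r ω‖ ^ 2)
          + 2 * ‖P.gradF (S.xbar r ω)‖ ^ 2) ∂P.μ := by
        refine integral_mono hgbsq (h3.add h4) fun ω => ?_
        have := S.gb_ptw_bound r ω
        have hrw : 2 * P.L ^ 2 * ((N : ℝ)⁻¹ * ∑ i, ‖S.x r i ω - S.xbar r ω‖ ^ 2)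
            = (2 * P.L ^ 2 * (N : ℝ)⁻¹) * ∑ i, ‖S.x r i ω - S.xbar r ω‖ ^ 2 := by ring
        rw [hrw] at this
        exact this
    _ = (2 * P.L ^ 2 * (N : ℝ)⁻¹) * (∫ ω, (∑ i, ‖S.x r i ω - S.xbar r ω‖ ^ 2) ∂P.μ)
        + 2 * ∫ ω, ‖P.gradF (S.xbar r ω)‖ ^ 2 ∂P.μ := by
        rw [integral_add h3 h4, MeasureTheory.integral_const_mul,
          MeasureTheory.integral_const_mul]
    _ = 2 * P.L ^ 2 * S.Xi r + 2 * ∫ ω, ‖P.gradF (S.xbar r ω)‖ ^ 2 ∂P.μ := by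
        rw [MTRun.Xi]
        ring

theorem ubar_sq_zero : ∫ ω, ‖S.ubar 0 ω‖ ^ 2 ∂P.μ = 0 := by
  simp [S.ubar_zero]

theorem ubar_unrolled (r : ℕ) :
    ∫ ω, ‖S.ubar (r + 1) ω‖ ^ 2 ∂P.μ ≤
      ∑ k ∈ Finset.range (r + 1),
        P.β ^ (r - k) * ((1 - P.β)⁻¹ * ∫ ω, ‖S.gb k ω‖ ^ 2 ∂P.μ + P.σ ^ 2 / N) := by
  induction r with
  | zero =>
    have h := S.step_ineq 0
    rw [S.ubar_sq_zero] at h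
    simpa using h
  | succ r ih =>
    have hstep := S.step_ineq (r + 1)
    have h2 : P.β * ∫ ω, ‖S.ubar (r + 1) ω‖ ^ 2 ∂P.μ
        ≤ P.β * ∑ k ∈ Finset.range (r + 1),
            P.β ^ (r - k) * ((1 - P.β)⁻¹ * ∫ ω, ‖S.gb k ω‖ ^ 2 ∂P.μ + P.σ ^ 2 / N) :=
      mul_le_mul_of_nonneg_left ih P.hβ0
    have heq : P.β * ∑ k ∈ Finset.range (r + 1),
          P.β ^ (r - k) * ((1 - P.β)⁻¹ * ∫ ω, ‖S.gb k ω‖ ^ 2 ∂P.μ + P.σ ^ 2 / N)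
        + ((1 - P.β)⁻¹ * ∫ ω, ‖S.gb (r + 1) ω‖ ^ 2 ∂P.μ + P.σ ^ 2 / N)
        = ∑ k ∈ Finset.range (r + 2),
            P.β ^ (r + 1 - k) * ((1 - P.β)⁻¹ * ∫ ω, ‖S.gb k ω‖ ^ 2 ∂P.μ + P.σ ^ 2 / N) := by
      conv_rhs => rw [Finset.sum_range_succ]
      rw [Finset.mul_sum]
      congr 1
      · refine Finset.sum_congr rfl fun k hk => ?_
        have hk' : k ≤ r := Nat.lt_succ_iff.1 (Finset.mem_range.1 hk)
        have hsub : r + 1 - k = (r - k) + 1 := by omega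
        rw [hsub, pow_succ]
        ring
      · simp
    calc ∫ ω, ‖S.ubar (r + 2) ω‖ ^ 2 ∂P.μ
        ≤ P.β * ∫ ω, ‖S.ubar (r + 1) ω‖ ^ 2 ∂P.μ
            + (1 - P.β)⁻¹ * ∫ ω, ‖S.gb (r + 1) ω‖ ^ 2 ∂P.μ + P.σ ^ 2 / N := hstep
      _ ≤ P.β * ∑ k ∈ Finset.range (r + 1),
            P.β ^ (r - k) * ((1 - P.β)⁻¹ * ∫ ω, ‖S.gb k ω‖ ^ 2 ∂P.μ + P.σ ^ 2 / N)
            + ((1 - P.β)⁻¹ * ∫ ω, ‖S.gb (r + 1) ω‖ ^ 2 ∂P.μ + P.σ ^ 2 / N) := by linarith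
      _ = _ := heq

end MTRun

/-- **Lemma** (bound on the average momentum `ū`): for every round `r ≥ 0`,
`E‖ū^{(r+1)}‖² ≤ (2L²/(1−β)) ∑_{k=0}^{r} β^{r−k} Ξ^{(k)}
  + (2/(1−β)) ∑_{k=0}^{r} β^{r−k} E‖∇f(x̄^{(k)})‖² + 2σ²/(N(1−β)²)`. -/
theorem ubar_bound
    (N d : ℕ) (Ω : Type) [mΩ : MeasurableSpace Ω]
    (P : MTProblem N d Ω) (S : MTRun P) :
    ∀ r : ℕ,
      ∫ ω, ‖S.ubar (r + 1) ω‖ ^ 2 ∂P.μ ≤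
        2 * P.L ^ 2 / (1 - P.β) * ∑ k ∈ Finset.range (r + 1), P.β ^ (r - k) * S.Xi k
          + 2 / (1 - P.β) *
              ∑ k ∈ Finset.range (r + 1),
                P.β ^ (r - k) * ∫ ω, ‖P.gradF (S.xbar k ω)‖ ^ 2 ∂P.μ
          + 2 * P.σ ^ 2 / ((N : ℝ) * (1 - P.β) ^ 2) := by
  intro r
  have h1β : (0:ℝ) < 1 - P.β := by linarith [P.hβ1]
  have hNpos : (0:ℝ) < N := Nat.cast_pos.2 P.hN
  have hclaim := S.ubar_unrolled r
  -- split the sum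
  have hsplit : ∑ k ∈ Finset.range (r + 1),
        P.β ^ (r - k) * ((1 - P.β)⁻¹ * ∫ ω, ‖S.gb k ω‖ ^ 2 ∂P.μ + P.σ ^ 2 / N)
      = (∑ k ∈ Finset.range (r + 1),
          P.β ^ (r - k) * ((1 - P.β)⁻¹ * ∫ ω, ‖S.gb k ω‖ ^ 2 ∂P.μ))
        + ∑ k ∈ Finset.range (r + 1), P.β ^ (r - k) * (P.σ ^ 2 / N) := by
    rw [← Finset.sum_add_distrib]
    exact Finset.sum_congr rfl fun k _ => by ring
  -- first sum bound
  have hfirst : (∑ k ∈ Finset.range (r + 1),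
        P.β ^ (r - k) * ((1 - P.β)⁻¹ * ∫ ω, ‖S.gb k ω‖ ^ 2 ∂P.μ))
      ≤ 2 * P.L ^ 2 / (1 - P.β) * ∑ k ∈ Finset.range (r + 1), P.β ^ (r - k) * S.Xi k
        + 2 / (1 - P.β) * ∑ k ∈ Finset.range (r + 1),
            P.β ^ (r - k) * ∫ ω, ‖P.gradF (S.xbar k ω)‖ ^ 2 ∂P.μ := by
    have hle : (∑ k ∈ Finset.range (r + 1),
          P.β ^ (r - k) * ((1 - P.β)⁻¹ * ∫ ω, ‖S.gb k ω‖ ^ 2 ∂P.μ))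
        ≤ ∑ k ∈ Finset.range (r + 1),
            P.β ^ (r - k) * ((1 - P.β)⁻¹ *
              (2 * P.L ^ 2 * S.Xi k + 2 * ∫ ω, ‖P.gradF (S.xbar k ω)‖ ^ 2 ∂P.μ)) := by
      refine Finset.sum_le_sum fun k _ => ?_
      refine mul_le_mul_of_nonneg_left ?_ (pow_nonneg P.hβ0 _)
      exact mul_le_mul_of_nonneg_left (S.gb_bound k) (inv_nonneg.2 h1β.le)
    refine hle.trans (le_of_eq ?_)
    rw [Finset.mul_sum, Finset.mul_sum, ← Finset.sum_add_distrib]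
    refine Finset.sum_congr rfl fun k _ => ?_
    field_simp
  -- second sum bound
  have hgeom : ∑ k ∈ Finset.range (r + 1), P.β ^ (r - k) ≤ (1 - P.β)⁻¹ := by
    have hrefl : ∑ k ∈ Finset.range (r + 1), P.β ^ (r - k)
        = ∑ k ∈ Finset.range (r + 1), P.β ^ k := by
      have := Finset.sum_range_reflect (fun j => P.β ^ j) (r + 1)
      simpa using this
    rw [hrefl, Finset.range_eq_Ico]
    have := geom_sum_Ico_le_of_lt_one (x := P.β) P.hβ0 P.hβ1 (m := 0) (n := r + 1)
    simpa [one_div] using this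
  have hsecond : ∑ k ∈ Finset.range (r + 1), P.β ^ (r - k) * (P.σ ^ 2 / N)
      ≤ 2 * P.σ ^ 2 / ((N : ℝ) * (1 - P.β) ^ 2) := by
    have h1 : ∑ k ∈ Finset.range (r + 1), P.β ^ (r - k) * (P.σ ^ 2 / N)
        = (P.σ ^ 2 / N) * ∑ k ∈ Finset.range (r + 1), P.β ^ (r - k) := by
      rw [Finset.mul_sum]
      exact Finset.sum_congr rfl fun k _ => by ring
    rw [h1]
    have h2 : (P.σ ^ 2 / N) * ∑ k ∈ Finset.range (r + 1), P.β ^ (r - k)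
        ≤ (P.σ ^ 2 / N) * (1 - P.β)⁻¹ :=
      mul_le_mul_of_nonneg_left hgeom (by positivity)
    refine h2.trans ?_
    have h3 : (P.σ ^ 2 / N) * (1 - P.β)⁻¹ = P.σ ^ 2 / ((N : ℝ) * (1 - P.β)) := by
      field_simp
    rw [h3, div_le_div_iff₀ (by positivity) (by positivity)]
    have hx : (0:ℝ) ≤ P.σ ^ 2 * (N : ℝ) * (1 - P.β) * (1 + P.β) :=
      mul_nonneg (mul_nonneg (mul_nonneg (sq_nonneg _) hNpos.le) h1β.le)
        (by linarith [P.hβ0])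
    nlinarith [hx]
  calc ∫ ω, ‖S.ubar (r + 1) ω‖ ^ 2 ∂P.μ
      ≤ (∑ k ∈ Finset.range (r + 1),
          P.β ^ (r - k) * ((1 - P.β)⁻¹ * ∫ ω, ‖S.gb k ω‖ ^ 2 ∂P.μ))
        + ∑ k ∈ Finset.range (r + 1), P.β ^ (r - k) * (P.σ ^ 2 / N) := by
        rw [← hsplit]; exact hclaim
    _ ≤ _ := add_le_add hfirst hsecond

end
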